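/- Let n, k be positive integers with k ≤ n, let μ₀ ≥ 1, and let U* ∈ ℝ^{n×k} be orthonormal with every row u_i* satisfying ‖u_i*‖₂² ≤ μ₀k/n. Let Ū ∈ ℝ^{n×k} be orthonormal with dist(Ū, U*) ≤ 1/(φ·k^{1/2}) for some φ ≥ √10/(√5 − 2). Let Û ∈ ℝ^{n×k} be obtained from Ū by applying 𝒯₁ to every row, and let U ∈ ℝ^{n×k} be any orthonormal matrix whose columns span the column space of Û. Then every row u_i of U satisfies ‖u_i‖₂ ≤ √(5μ₀k/n), and dist(U, U*) ≤ √10/φ. -/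

import Mathlib

open Matrix

/-- Euclidean norm of a vector in `ℝ^k`. -/
noncomputable def vecNorm {k : ℕ} (v : Fin k → ℝ) : ℝ := Real.sqrt (∑ i, v i ^ 2)

/-- Spectral norm (largest singular value) of a real matrix. -/
noncomputable def specNorm {m n : ℕ} (A : Matrix (Fin m) (Fin n) ℝ) : ℝ :=
  sSup {c : ℝ | ∃ x : Fin n → ℝ, vecNorm x = 1 ∧ c = vecNorm (A.mulVec x)}

/-- Subspace distance between the column spaces of two orthonormal matrices. -/
noncomputable def distS {n k : ℕ} (X Y : Matrix (Fin n) (Fin k) ℝ) : ℝ :=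
  specNorm (X * Xᵀ - Y * Yᵀ)

/-- The truncation operator `𝒯₁` with threshold `s`. -/
noncomputable def T1 {k : ℕ} (s : ℝ) (u : Fin k → ℝ) : Fin k → ℝ :=
  if 2 * s ≤ vecNorm u then (s / vecNorm u) • u else u

section Helpers

def toE {k : ℕ} (v : Fin k → ℝ) : EuclideanSpace ℝ (Fin k) := WithLp.toLp 2 v

lemma vecNorm_eq_norm {k : ℕ} (v : Fin k → ℝ) : vecNorm v = ‖toE v‖ := by
  rw [EuclideanSpace.norm_eq]
  simp [vecNorm, toE, Real.norm_eq_abs, sq_abs]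

lemma vecNorm_nonneg {k : ℕ} (v : Fin k → ℝ) : 0 ≤ vecNorm v := Real.sqrt_nonneg _

lemma vecNorm_sq {k : ℕ} (v : Fin k → ℝ) : vecNorm v ^ 2 = ∑ i, v i ^ 2 := by
  rw [vecNorm, Real.sq_sqrt]; positivity

lemma dotp_self {k : ℕ} (v : Fin k → ℝ) : v ⬝ᵥ v = vecNorm v ^ 2 := by
  rw [vecNorm_sq]; simp [dotProduct, sq]

lemma vecNorm_smul {k : ℕ} (c : ℝ) (v : Fin k → ℝ) : vecNorm (c • v) = |c| * vecNorm v := by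
  rw [vecNorm_eq_norm, vecNorm_eq_norm]
  have : toE (c • v) = c • toE v := rfl
  rw [this, norm_smul, Real.norm_eq_abs]

lemma vecNorm_add_le {k : ℕ} (u v : Fin k → ℝ) : vecNorm (u + v) ≤ vecNorm u + vecNorm v := by
  rw [vecNorm_eq_norm, vecNorm_eq_norm, vecNorm_eq_norm]
  exact norm_add_le (toE u) (toE v)

lemma vecNorm_sub_le {k : ℕ} (u v : Fin k → ℝ) : vecNorm (u - v) ≤ vecNorm u + vecNorm v := by
  rw [vecNorm_eq_norm, vecNorm_eq_norm, vecNorm_eq_norm]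
  exact norm_sub_le (toE u) (toE v)

lemma vecNorm_neg {k : ℕ} (v : Fin k → ℝ) : vecNorm (-v) = vecNorm v := by
  rw [vecNorm_eq_norm, vecNorm_eq_norm]; exact norm_neg (toE v)

lemma sub_vecNorm_le {k : ℕ} (u v : Fin k → ℝ) : vecNorm u - vecNorm v ≤ vecNorm (u - v) := by
  rw [vecNorm_eq_norm, vecNorm_eq_norm, vecNorm_eq_norm]
  exact norm_sub_norm_le (toE u) (toE v)

lemma dotp_le {k : ℕ} (u v : Fin k → ℝ) : u ⬝ᵥ v ≤ vecNorm u * vecNorm v := by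
  rw [vecNorm_eq_norm, vecNorm_eq_norm]
  have := real_inner_le_norm (toE u) (toE v)
  simpa [PiLp.inner_apply, toE, dotProduct, RCLike.inner_apply, mul_comm] using this

lemma pythag {k : ℕ} (u v : Fin k → ℝ) (h : u ⬝ᵥ v = 0) :
    vecNorm (u + v) ^ 2 = vecNorm u ^ 2 + vecNorm v ^ 2 := by
  simp only [vecNorm_sq]
  have e : ∑ i, (u + v) i ^ 2 = ∑ i, (u i ^2 + v i ^2 + 2 * (u i * v i)) := by
    apply Finset.sum_congr rfl; intro i _; simp only [Pi.add_apply]; ring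
  rw [e, Finset.sum_add_distrib, Finset.sum_add_distrib, ← Finset.mul_sum]
  have h2 : ∑ i, u i * v i = 0 := h
  rw [h2]; ring

lemma vecNorm_single {k : ℕ} (j : Fin k) : vecNorm (Pi.single j 1 : Fin k → ℝ) = 1 := by
  rw [vecNorm]
  have : ∑ i, (Pi.single j 1 : Fin k → ℝ) i ^ 2 = 1 := by
    rw [Finset.sum_eq_single j] <;> simp +contextual [Pi.single_apply]
  rw [this, Real.sqrt_one]

lemma vecNorm_eq_of_sq_eq {k m : ℕ} {u : Fin k → ℝ} {v : Fin m → ℝ}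
    (h : vecNorm u ^ 2 = vecNorm v ^ 2) : vecNorm u = vecNorm v := by
  nlinarith [vecNorm_nonneg u, vecNorm_nonneg v]

lemma vecNorm_zero {k : ℕ} : vecNorm (0 : Fin k → ℝ) = 0 := by simp [vecNorm]

lemma pythag_sub {k : ℕ} (u v : Fin k → ℝ) (h : u ⬝ᵥ v = 0) :
    vecNorm (u - v) ^ 2 = vecNorm u ^ 2 + vecNorm v ^ 2 := by
  have h2 : u ⬝ᵥ (-v) = 0 := by rw [dotProduct_neg, h, neg_zero]
  have := pythag u (-v) h2
  rw [← sub_eq_add_neg] at this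
  rw [this, vecNorm_neg]

lemma mulVec_le_frob {m n : ℕ} (A : Matrix (Fin m) (Fin n) ℝ) (x : Fin n → ℝ) :
    vecNorm (A.mulVec x) ≤ Real.sqrt (∑ i, vecNorm (A i) ^ 2) * vecNorm x := by
  have h1 : vecNorm (A.mulVec x) ^ 2 ≤ (∑ i, vecNorm (A i) ^ 2) * vecNorm x ^ 2 := by
    rw [vecNorm_sq, Finset.sum_mul]
    apply Finset.sum_le_sum
    intro i _
    have : A.mulVec x i = A i ⬝ᵥ x := rfl
    rw [this]
    have hle : |A i ⬝ᵥ x| ≤ vecNorm (A i) * vecNorm x := by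
      rcases abs_cases (A i ⬝ᵥ x) with ⟨h, _⟩ | ⟨h, _⟩
      · rw [h]; exact dotp_le _ _
      · rw [h]
        have := dotp_le (A i) (-x)
        have e : A i ⬝ᵥ (-x) = -(A i ⬝ᵥ x) := by simp
        rw [e] at this
        calc -(A i ⬝ᵥ x) ≤ vecNorm (A i) * vecNorm (-x) := this
        _ = vecNorm (A i) * vecNorm x := by rw [vecNorm_neg]
    calc (A i ⬝ᵥ x) ^2 = |A i ⬝ᵥ x| ^ 2 := (sq_abs _).symm
    _ ≤ (vecNorm (A i) * vecNorm x)^2 := by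
        apply sq_le_sq' <;> nlinarith [abs_nonneg (A i ⬝ᵥ x)]
    _ = vecNorm (A i) ^2 * vecNorm x ^2 := by ring
  have h2 : (Real.sqrt (∑ i, vecNorm (A i) ^ 2) * vecNorm x) ^ 2
      = (∑ i, vecNorm (A i) ^ 2) * vecNorm x ^ 2 := by
    rw [mul_pow, Real.sq_sqrt (by positivity)]
  nlinarith [vecNorm_nonneg (A.mulVec x), vecNorm_nonneg x,
    Real.sqrt_nonneg (∑ i, vecNorm (A i) ^ 2), h1, h2,
    mul_nonneg (Real.sqrt_nonneg (∑ i, vecNorm (A i) ^ 2)) (vecNorm_nonneg x)]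

lemma specSet_bddAbove {m n : ℕ} (A : Matrix (Fin m) (Fin n) ℝ) :
    BddAbove {c : ℝ | ∃ x : Fin n → ℝ, vecNorm x = 1 ∧ c = vecNorm (A.mulVec x)} := by
  refine ⟨Real.sqrt (∑ i, vecNorm (A i) ^ 2), ?_⟩
  rintro c ⟨x, hx, rfl⟩
  have := mulVec_le_frob A x
  rw [hx, mul_one] at this; exact this

lemma le_specNorm_of_unit {m n : ℕ} (A : Matrix (Fin m) (Fin n) ℝ) {x : Fin n → ℝ}
    (hx : vecNorm x = 1) : vecNorm (A.mulVec x) ≤ specNorm A :=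
  le_csSup (specSet_bddAbove A) ⟨x, hx, rfl⟩

lemma specNorm_nonneg {m n : ℕ} (hn : 0 < n) (A : Matrix (Fin m) (Fin n) ℝ) :
    0 ≤ specNorm A := by
  have := le_specNorm_of_unit A (vecNorm_single (⟨0, hn⟩ : Fin n))
  exact le_trans (vecNorm_nonneg _) this

lemma specNorm_le {m n : ℕ} {A : Matrix (Fin m) (Fin n) ℝ} {C : ℝ} (hC : 0 ≤ C)
    (h : ∀ x : Fin n → ℝ, vecNorm x = 1 → vecNorm (A.mulVec x) ≤ C) : specNorm A ≤ C := by
  apply Real.sSup_le _ hC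
  rintro c ⟨x, hx, rfl⟩; exact h x hx

lemma vecNorm_mulVec_le {m n : ℕ} (hn : 0 < n) (A : Matrix (Fin m) (Fin n) ℝ) (x : Fin n → ℝ) :
    vecNorm (A.mulVec x) ≤ specNorm A * vecNorm x := by
  by_cases hx : vecNorm x = 0
  · have hx0 : x = 0 := by
      have hs := vecNorm_sq x
      rw [hx] at hs
      have hsum : ∑ i, x i ^2 = 0 := by rw [← hs]; ring
      funext i
      have hxi : x i ^ 2 = 0 :=
        (Finset.sum_eq_zero_iff_of_nonneg (fun j _ => sq_nonneg (x j))).mp hsum i (Finset.mem_univ i)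
      simpa using pow_eq_zero_iff (n := 2) (by norm_num) |>.mp hxi
    rw [hx0]
    simp only [mulVec_zero, vecNorm_zero, mul_zero, le_refl]
  · have hpos : 0 < vecNorm x := lt_of_le_of_ne (vecNorm_nonneg x) (Ne.symm hx)
    set u : Fin n → ℝ := (vecNorm x)⁻¹ • x with hu
    have hun : vecNorm u = 1 := by
      rw [hu, vecNorm_smul, abs_of_pos (by positivity)]
      field_simp
    have hxu : x = vecNorm x • u := by
      rw [hu, smul_smul]; field_simp; rw [one_smul]
    have hA := le_specNorm_of_unit A hun
    calc vecNorm (A.mulVec x) = vecNorm (A.mulVec (vecNorm x • u)) := by conv_lhs => rw [hxu]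
    _ = vecNorm x * vecNorm (A.mulVec u) := by
        rw [mulVec_smul, vecNorm_smul, abs_of_pos hpos]
    _ ≤ vecNorm x * specNorm A := by nlinarith
    _ = specNorm A * vecNorm x := mul_comm _ _

lemma specNorm_mul_le {m n p : ℕ} (hn : 0 < n) (hp : 0 < p)
    (A : Matrix (Fin m) (Fin n) ℝ) (B : Matrix (Fin n) (Fin p) ℝ) :
    specNorm (A * B) ≤ specNorm A * specNorm B := by
  apply specNorm_le (mul_nonneg (specNorm_nonneg hn A) (specNorm_nonneg hp B))
  intro x hx
  rw [← mulVec_mulVec]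
  calc vecNorm (A.mulVec (B.mulVec x)) ≤ specNorm A * vecNorm (B.mulVec x) :=
        vecNorm_mulVec_le hn A _
  _ ≤ specNorm A * (specNorm B * vecNorm x) := by
      have := vecNorm_mulVec_le hp B x
      nlinarith [specNorm_nonneg hn A]
  _ = specNorm A * specNorm B := by rw [hx, mul_one]

lemma specNorm_transpose_le {m n : ℕ} (hm : 0 < m) (hn : 0 < n)
    (A : Matrix (Fin m) (Fin n) ℝ) : specNorm Aᵀ ≤ specNorm A := by
  apply specNorm_le (specNorm_nonneg hn A)
  intro y hy
  have e1 : (Aᵀ.mulVec y) ⬝ᵥ (Aᵀ.mulVec y) = y ⬝ᵥ (A.mulVec (Aᵀ.mulVec y)) := by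
    rw [dotProduct_mulVec y A, mulVec_transpose]
  have key : vecNorm (Aᵀ.mulVec y) ^ 2 ≤ specNorm A * vecNorm (Aᵀ.mulVec y) := by
    rw [← dotp_self, e1]
    calc y ⬝ᵥ A.mulVec (Aᵀ.mulVec y)
        ≤ vecNorm y * vecNorm (A.mulVec (Aᵀ.mulVec y)) := dotp_le _ _
    _ = vecNorm (A.mulVec (Aᵀ.mulVec y)) := by rw [hy, one_mul]
    _ ≤ specNorm A * vecNorm (Aᵀ.mulVec y) := vecNorm_mulVec_le hn A _
  nlinarith [vecNorm_nonneg (Aᵀ.mulVec y), specNorm_nonneg hn A]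

lemma specNorm_add_le {m n : ℕ} (hn : 0 < n) (A B : Matrix (Fin m) (Fin n) ℝ) :
    specNorm (A + B) ≤ specNorm A + specNorm B := by
  apply specNorm_le (add_nonneg (specNorm_nonneg hn A) (specNorm_nonneg hn B))
  intro x hx
  rw [add_mulVec]
  calc vecNorm (A.mulVec x + B.mulVec x) ≤ vecNorm (A.mulVec x) + vecNorm (B.mulVec x) :=
        vecNorm_add_le _ _
  _ ≤ specNorm A * vecNorm x + specNorm B * vecNorm x := by
      gcongr <;> [exact vecNorm_mulVec_le hn A x; exact vecNorm_mulVec_le hn B x]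
  _ = specNorm A + specNorm B := by rw [hx]; ring

lemma specNorm_neg {m n : ℕ} (A : Matrix (Fin m) (Fin n) ℝ) :
    specNorm (-A) = specNorm A := by
  unfold specNorm
  congr 1
  ext c
  constructor <;> rintro ⟨x, hx, rfl⟩ <;> exact ⟨x, hx, by rw [neg_mulVec, vecNorm_neg]⟩

lemma mulVec_isometry {m n : ℕ} {A : Matrix (Fin m) (Fin n) ℝ} (hA : Aᵀ * A = 1)
    (y : Fin n → ℝ) : vecNorm (A.mulVec y) = vecNorm y := by
  apply vecNorm_eq_of_sq_eq
  rw [← dotp_self, ← dotp_self]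
  rw [dotProduct_mulVec (A.mulVec y) A y, ← mulVec_transpose, mulVec_mulVec, hA, one_mulVec]

lemma orth_specNorm_le_one {m n : ℕ} {A : Matrix (Fin m) (Fin n) ℝ} (hA : Aᵀ * A = 1) :
    specNorm A ≤ 1 := by
  apply specNorm_le zero_le_one
  intro x hx
  rw [mulVec_isometry hA, hx]

lemma proj_orth {m n : ℕ} {V : Matrix (Fin m) (Fin n) ℝ} (hV : Vᵀ * V = 1)
    (v : Fin m → ℝ) (c : Fin n → ℝ) :
    (v - (V * Vᵀ).mulVec v) ⬝ᵥ (V.mulVec c) = 0 := by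
  rw [dotProduct_mulVec, ← mulVec_transpose]
  have : Vᵀ.mulVec (v - (V * Vᵀ).mulVec v) = 0 := by
    rw [mulVec_sub, mulVec_mulVec, ← Matrix.mul_assoc, hV, Matrix.one_mul, sub_self]
  rw [this, zero_dotProduct]

lemma proj_contract {m n : ℕ} {V : Matrix (Fin m) (Fin n) ℝ} (hV : Vᵀ * V = 1)
    (v : Fin m → ℝ) : vecNorm (v - (V * Vᵀ).mulVec v) ≤ vecNorm v := by
  have horth := proj_orth hV v (Vᵀ.mulVec v)
  have hsplit : (v - (V * Vᵀ).mulVec v) + (V * Vᵀ).mulVec v = v := sub_add_cancel _ _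
  have hp := pythag (v - (V * Vᵀ).mulVec v) ((V * Vᵀ).mulVec v)
    (by simpa only [mulVec_mulVec] using horth)
  rw [hsplit] at hp
  nlinarith [vecNorm_nonneg (v - (V * Vᵀ).mulVec v), vecNorm_nonneg v,
    sq_nonneg (vecNorm ((V * Vᵀ).mulVec v))]

lemma proj_min {m n : ℕ} {V : Matrix (Fin m) (Fin n) ℝ} (hV : Vᵀ * V = 1)
    (v : Fin m → ℝ) (z : Fin n → ℝ) :
    vecNorm (v - (V * Vᵀ).mulVec v) ≤ vecNorm (v - V.mulVec z) := by
  have hsplit : v - V.mulVec z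
      = (v - (V * Vᵀ).mulVec v) + V.mulVec (Vᵀ.mulVec v - z) := by
    rw [mulVec_sub, mulVec_mulVec]
    abel
  have hp := pythag (v - (V * Vᵀ).mulVec v) (V.mulVec (Vᵀ.mulVec v - z))
    (proj_orth hV v _)
  rw [← hsplit] at hp
  nlinarith [vecNorm_nonneg (v - (V * Vᵀ).mulVec v), vecNorm_nonneg (v - V.mulVec z),
    sq_nonneg (vecNorm (V.mulVec (Vᵀ.mulVec v - z)))]

noncomputable def frob {m n : ℕ} (A : Matrix (Fin m) (Fin n) ℝ) : ℝ :=
  Real.sqrt (∑ i, vecNorm (A i) ^ 2)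

lemma specNorm_le_frob {m n : ℕ} (A : Matrix (Fin m) (Fin n) ℝ) : specNorm A ≤ frob A := by
  apply specNorm_le (Real.sqrt_nonneg _)
  intro x hx
  have := mulVec_le_frob A x
  rw [hx, mul_one] at this
  exact this

lemma frob_le_sqrt_card_mul_specNorm {m n : ℕ} (hn : 0 < n) (A : Matrix (Fin m) (Fin n) ℝ) :
    frob A ≤ Real.sqrt n * specNorm A := by
  have hcol : ∀ j : Fin n, vecNorm (A.mulVec (Pi.single j 1)) ^ 2 = ∑ i, A i j ^ 2 := by
    intro j
    rw [vecNorm_sq, mulVec_single]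
    simp
  have hsum : ∑ i, vecNorm (A i) ^ 2 = ∑ j, vecNorm (A.mulVec (Pi.single j 1)) ^ 2 := by
    simp only [hcol, vecNorm_sq]
    rw [Finset.sum_comm]
  have hb : ∀ j : Fin n, vecNorm (A.mulVec (Pi.single j 1)) ^ 2 ≤ specNorm A ^ 2 := by
    intro j
    have h1 : vecNorm (A.mulVec (Pi.single j 1)) ≤ specNorm A :=
      le_specNorm_of_unit A (vecNorm_single j)
    nlinarith [vecNorm_nonneg (A.mulVec (Pi.single j 1)), specNorm_nonneg hn A]
  have hsle : ∑ i, vecNorm (A i) ^ 2 ≤ n * specNorm A ^ 2 := by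
    rw [hsum]
    calc ∑ j, vecNorm (A.mulVec (Pi.single j 1)) ^ 2 ≤ ∑ _j : Fin n, specNorm A ^ 2 :=
          Finset.sum_le_sum (fun j _ => hb j)
    _ = n * specNorm A ^ 2 := by rw [Finset.sum_const]; simp [mul_comm]
  calc frob A ≤ Real.sqrt (n * specNorm A ^ 2) := Real.sqrt_le_sqrt hsle
  _ = Real.sqrt n * specNorm A := by
      rw [Real.sqrt_mul (by positivity), Real.sqrt_sq (specNorm_nonneg hn A)]

lemma frob_mono_rows {m n p : ℕ} {D : Matrix (Fin m) (Fin n) ℝ} {E : Matrix (Fin m) (Fin p) ℝ}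
    (h : ∀ i, vecNorm (D i) ≤ vecNorm (E i)) : frob D ≤ frob E := by
  apply Real.sqrt_le_sqrt
  apply Finset.sum_le_sum
  intro i _
  nlinarith [vecNorm_nonneg (D i), vecNorm_nonneg (E i), h i]

lemma row_mul {m n p : ℕ} (X : Matrix (Fin m) (Fin n) ℝ) (Y : Matrix (Fin n) (Fin p) ℝ)
    (i : Fin m) : (X * Y) i = Yᵀ.mulVec (X i) := by
  funext j
  simp [Matrix.mul_apply, Matrix.mulVec, dotProduct, Matrix.transpose_apply, mul_comm]

end Helpers


section Arith

lemma aux_sqle {v s r : ℝ} (h1 : v ^ 2 ≤ r) (h2 : s ^ 2 = r) (hv : 0 ≤ v) (hs : 0 ≤ s) :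
    v ≤ s := by nlinarith

lemma aux_S {t c a : ℝ} (ht : 0 ≤ t) (h1 : c * t ≤ 1) (hc : 2 ≤ c * a) (ha0 : 0 ≤ a) :
    t ≤ a / 2 := by
  nlinarith [mul_le_mul_of_nonneg_right h1 ha0, mul_le_mul_of_nonneg_left hc ht]

lemma aux_X2 {A2 B2 τ ε sq5 : ℝ} (hA : A2 ≤ (τ * (sq5 / 2)) ^ 2) (hB : B2 ≤ τ ^ 2)
    (h5 : sq5 ^ 2 = 5) (hτ : τ ≤ 2 * ε) (hτ0 : 0 ≤ τ) : A2 + B2 ≤ 9 * ε ^ 2 := by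
  nlinarith [sq_nonneg (2 * ε - τ), sq_nonneg τ]

lemma aux_fin {X ε : ℝ} (h : X ^ 2 ≤ 9 * ε ^ 2) (hX : 0 ≤ X) (hε : 0 < ε) : X ≤ 3 * ε := by
  nlinarith

lemma aux_pos {φ c d : ℝ} (hc : 0 < c) (hd : 0 < d) (h : d ≤ φ * c) : 0 < φ := by
  nlinarith

end Arith

set_option maxHeartbeats 1000000 in
theorem stmt_0 {n k : ℕ} (hn : 0 < n) (hk : 0 < k) (hkn : k ≤ n)
    (μ₀ φ : ℝ) (hμ : 1 ≤ μ₀)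
    (hφ : Real.sqrt 10 / (Real.sqrt 5 - 2) ≤ φ)
    (Ustar Ubar Uhat U : Matrix (Fin n) (Fin k) ℝ)
    (hUstarOrth : Ustarᵀ * Ustar = 1)
    (hUstarRows : ∀ i, vecNorm (Ustar i) ^ 2 ≤ μ₀ * k / n)
    (hUbarOrth : Ubarᵀ * Ubar = 1)
    (hdist : distS Ubar Ustar ≤ 1 / (φ * Real.sqrt k))
    (hUhat : ∀ i, Uhat i = T1 (Real.sqrt (μ₀ * k / n)) (Ubar i))
    (hUOrth : Uᵀ * U = 1)
    (hspan : LinearMap.range U.mulVecLin = LinearMap.range Uhat.mulVecLin) :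
    (∀ i, vecNorm (U i) ≤ Real.sqrt (5 * μ₀ * k / n)) ∧
      distS U Ustar ≤ Real.sqrt 10 / φ := by
  -- numeric preliminaries
  have hk1 : (1:ℝ) ≤ (k:ℝ) := by exact_mod_cast hk
  have hkR : (0:ℝ) < (k:ℝ) := by exact_mod_cast hk
  have hnR : (0:ℝ) < (n:ℝ) := by exact_mod_cast hn
  have ha5 : Real.sqrt 5 ^ 2 = 5 := Real.sq_sqrt (by norm_num)
  have hb10 : Real.sqrt 10 ^ 2 = 10 := Real.sq_sqrt (by norm_num)
  have ha0 : 0 ≤ Real.sqrt 5 := Real.sqrt_nonneg 5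
  have hb0 : 0 ≤ Real.sqrt 10 := Real.sqrt_nonneg 10
  have ha2 : 2 < Real.sqrt 5 := by
    nlinarith [ha5, ha0]
  have hb3 : 3 ≤ Real.sqrt 10 := by
    nlinarith [hb10, hb0]
  have hab : Real.sqrt 5 ≤ Real.sqrt 10 := Real.sqrt_le_sqrt (by norm_num)
  have ha0' : 0 < Real.sqrt 5 := by linarith
  have hb0' : 0 < Real.sqrt 10 := by linarith
  have hsub : 0 < Real.sqrt 5 - 2 := by linarith
  have hφb : Real.sqrt 10 ≤ φ * (Real.sqrt 5 - 2) := by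
    have := mul_le_mul_of_nonneg_right hφ (le_of_lt hsub)
    rwa [div_mul_cancel₀ _ (ne_of_gt hsub)] at this
  have hφ0 : 0 < φ := aux_pos hsub hb0' hφb
  have hε0 : 0 < 1/φ := by positivity
  have hεle : 1/φ ≤ (Real.sqrt 5 - 2)/Real.sqrt 10 := by
    rw [div_le_div_iff₀ hφ0 hb0']
    linarith [hφb]
  have hfrac : (Real.sqrt 5 - 2)/Real.sqrt 10 ≤ (Real.sqrt 5 - 2)/Real.sqrt 5 := by
    rw [div_le_div_iff₀ hb0' ha0']
    calc (Real.sqrt 5 - 2) * Real.sqrt 5 ≤ (Real.sqrt 5 - 2) * Real.sqrt 10 :=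
        mul_le_mul_of_nonneg_left hab (le_of_lt hsub)
    _ = (Real.sqrt 5 - 2) * Real.sqrt 10 := rfl
  have hfrac2 : (Real.sqrt 5 - 2)/Real.sqrt 5 = 1 - 2/Real.sqrt 5 := by
    rw [sub_div, div_self (ne_of_gt ha0')]
  have h2a : 2 / Real.sqrt 5 ≤ 1 - 1/φ := by
    rw [hfrac2] at hfrac; linarith
  have hc25 : 2 ≤ (1 - 1/φ) * Real.sqrt 5 := by
    have := mul_le_mul_of_nonneg_right h2a (le_of_lt ha0')
    rwa [div_mul_cancel₀ _ (ne_of_gt ha0')] at this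
  have h1ε0 : 0 < 1 - 1/φ := by
    have h25 : 0 < 2 / Real.sqrt 5 := by positivity
    linarith
  have hsk0 : 0 < Real.sqrt (k:ℝ) := Real.sqrt_pos.mpr hkR
  have hsk1 : 1 ≤ Real.sqrt (k:ℝ) := by
    have := Real.sqrt_le_sqrt hk1
    rwa [Real.sqrt_one] at this
  -- the truncation threshold
  obtain ⟨s, hs⟩ : ∃ zz, zz = Real.sqrt (μ₀ * k / n) := ⟨_, rfl⟩
  rw [show Real.sqrt (μ₀ * k / n) = s from hs.symm] at hUhat
  have hratpos : 0 < μ₀ * k / n := by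
    apply div_pos (mul_pos (by linarith) hkR) hnR
  have hspos : 0 < s := by rw [hs]; exact Real.sqrt_pos.mpr hratpos
  have hsq : s ^ 2 = μ₀ * k / n := by rw [hs]; exact Real.sq_sqrt (le_of_lt hratpos)
  -- basic spectral facts
  have hδ0 : 0 ≤ distS Ubar Ustar := specNorm_nonneg hn _
  have hδε : distS Ubar Ustar ≤ 1/φ := by
    refine le_trans hdist ?_
    refine one_div_le_one_div_of_le hφ0 ?_
    exact le_mul_of_one_le_right (le_of_lt hφ0) hsk1
  have hUstar1 : specNorm Ustar ≤ 1 := orth_specNorm_le_one hUstarOrth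
  have hUbar1 : specNorm Ubar ≤ 1 := orth_specNorm_le_one hUbarOrth
  have hU1 : specNorm U ≤ 1 := orth_specNorm_le_one hUOrth
  have hUstarT1 : specNorm Ustarᵀ ≤ 1 := le_trans (specNorm_transpose_le hn hk Ustar) hUstar1
  have hUbarT1 : specNorm Ubarᵀ ≤ 1 := le_trans (specNorm_transpose_le hn hk Ubar) hUbar1
  have hUT1 : specNorm Uᵀ ≤ 1 := le_trans (specNorm_transpose_le hn hk U) hU1
  have hUstarIso := mulVec_isometry hUstarOrth
  have hUbarIso := mulVec_isometry hUbarOrth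
  have hUIso := mulVec_isometry hUOrth
  -- the matrix M = (I - Q) Ubar
  obtain ⟨M, hMdef⟩ : ∃ zz, zz = Ubar - Ustar * (Ustarᵀ * Ubar) := ⟨_, rfl⟩
  have hMfact : (Ubar * Ubarᵀ - Ustar * Ustarᵀ) * Ubar = M := by
    rw [hMdef, Matrix.sub_mul, Matrix.mul_assoc Ubar, hUbarOrth, Matrix.mul_one,
      Matrix.mul_assoc]
  have hMspec : specNorm M ≤ distS Ubar Ustar := by
    rw [← hMfact]
    calc specNorm ((Ubar * Ubarᵀ - Ustar * Ustarᵀ) * Ubar)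
        ≤ specNorm (Ubar * Ubarᵀ - Ustar * Ustarᵀ) * specNorm Ubar :=
          specNorm_mul_le hn hk _ _
    _ ≤ distS Ubar Ustar := by
        have h1 : 0 ≤ specNorm (Ubar * Ubarᵀ - Ustar * Ustarᵀ) := specNorm_nonneg hn _
        have h2 : distS Ubar Ustar = specNorm (Ubar * Ubarᵀ - Ustar * Ustarᵀ) := rfl
        rw [h2]
        exact mul_le_of_le_one_right h1 hUbar1
  -- rows of Ustar are short
  have hrowStar : ∀ i, vecNorm (Ustar i) ≤ s := by
    intro i
    exact aux_sqle (hUstarRows i) hsq (vecNorm_nonneg _) (le_of_lt hspos)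
  -- D = Uhat - Ubar, rowwise dominated by M
  obtain ⟨D, hDdef⟩ : ∃ zz, zz = Uhat - Ubar := ⟨_, rfl⟩
  have hW1 : specNorm (Ustarᵀ * Ubar)ᵀ ≤ 1 := by
    refine le_trans (specNorm_transpose_le hk hk _) ?_
    refine le_trans (specNorm_mul_le hn hk Ustarᵀ Ubar) ?_
    calc specNorm Ustarᵀ * specNorm Ubar ≤ 1 * 1 :=
        mul_le_mul hUstarT1 hUbar1 (specNorm_nonneg hk Ubar) zero_le_one
    _ = 1 := mul_one 1
  have hrowDM : ∀ i, vecNorm (D i) ≤ vecNorm (M i) := by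
    intro i
    have hMi : M i = Ubar i - (Ustarᵀ * Ubar)ᵀ.mulVec (Ustar i) := by
      rw [hMdef]
      have : (Ubar - Ustar * (Ustarᵀ * Ubar)) i = Ubar i - (Ustar * (Ustarᵀ * Ubar)) i := rfl
      rw [this, row_mul]
    have hPUi : vecNorm ((Ustarᵀ * Ubar)ᵀ.mulVec (Ustar i)) ≤ s := by
      calc vecNorm ((Ustarᵀ * Ubar)ᵀ.mulVec (Ustar i))
          ≤ specNorm (Ustarᵀ * Ubar)ᵀ * vecNorm (Ustar i) := vecNorm_mulVec_le hk _ _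
      _ ≤ 1 * s := mul_le_mul hW1 (hrowStar i) (vecNorm_nonneg _) zero_le_one
      _ = s := one_mul s
    have hDi : D i = Uhat i - Ubar i := by rw [hDdef]; funext j; simp [Matrix.sub_apply]
    rw [hDi, hUhat i, T1]
    by_cases hcs : 2 * s ≤ vecNorm (Ubar i)
    · rw [if_pos hcs]
      have hrpos : 0 < vecNorm (Ubar i) := lt_of_lt_of_le (by linarith) hcs
      have heq : (s / vecNorm (Ubar i)) • Ubar i - Ubar i
          = (s / vecNorm (Ubar i) - 1) • Ubar i := by
        rw [sub_smul, one_smul]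
      rw [heq, vecNorm_smul]
      have hsr : s / vecNorm (Ubar i) ≤ 1 := by
        rw [div_le_one hrpos]; linarith
      have habs : |s / vecNorm (Ubar i) - 1| = 1 - s / vecNorm (Ubar i) := by
        rw [abs_of_nonpos (by linarith)]; ring
      rw [habs]
      have h1 : (1 - s / vecNorm (Ubar i)) * vecNorm (Ubar i) = vecNorm (Ubar i) - s := by
        field_simp
      rw [h1]
      have h2 := sub_vecNorm_le (Ubar i) ((Ustarᵀ * Ubar)ᵀ.mulVec (Ustar i))
      rw [hMi]
      linarith
    · rw [if_neg hcs, sub_self]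
      rw [vecNorm_zero]
      exact vecNorm_nonneg _
  -- spectral bound on D
  have hDspec : specNorm D ≤ 1/φ := by
    calc specNorm D ≤ frob D := specNorm_le_frob D
    _ ≤ frob M := frob_mono_rows hrowDM
    _ ≤ Real.sqrt k * specNorm M := frob_le_sqrt_card_mul_specNorm hk M
    _ ≤ Real.sqrt k * (1/(φ * Real.sqrt k)) := by
        apply mul_le_mul_of_nonneg_left (le_trans hMspec hdist) (le_of_lt hsk0)
    _ = 1/φ := by
        rw [mul_one_div, mul_comm φ, div_mul_eq_div_div, div_self (ne_of_gt hsk0)]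
  -- smallest singular value of Uhat
  have hUhatEq : Ubar + D = Uhat := by rw [hDdef]; abel
  have hsig : ∀ y : Fin k → ℝ, (1 - 1/φ) * vecNorm y ≤ vecNorm (Uhat.mulVec y) := by
    intro y
    have h1 : Uhat.mulVec y = Ubar.mulVec y + D.mulVec y := by
      rw [← hUhatEq, add_mulVec]
    have h2 : vecNorm (Ubar.mulVec y) ≤ vecNorm (Uhat.mulVec y) + vecNorm (D.mulVec y) := by
      have e : Ubar.mulVec y = Uhat.mulVec y - D.mulVec y := by rw [h1]; abel
      rw [e]; exact vecNorm_sub_le _ _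
    have h3 : vecNorm (D.mulVec y) ≤ (1/φ) * vecNorm y :=
      le_trans (vecNorm_mulVec_le hk D y)
        (mul_le_mul_of_nonneg_right hDspec (vecNorm_nonneg y))
    rw [hUbarIso] at h2
    linarith
  -- column-space matrix S with  Uhat S = U
  have hcol : ∀ j : Fin k, ∃ y : Fin k → ℝ, Uhat.mulVec y = U.mulVec (Pi.single j 1) := by
    intro j
    have hm : U.mulVec (Pi.single j 1) ∈ LinearMap.range Uhat.mulVecLin := by
      rw [← hspan]
      exact ⟨Pi.single j 1, by simp [mulVecLin_apply]⟩
    obtain ⟨y, hy⟩ := hm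
    exact ⟨y, by simpa [mulVecLin_apply] using hy⟩
  choose Y hY using hcol
  obtain ⟨S, hSdef⟩ : ∃ zz : Matrix (Fin k) (Fin k) ℝ, zz = Matrix.of (fun l j => Y j l) := ⟨_, rfl⟩
  have hUS : ∀ x : Fin k → ℝ, Uhat.mulVec (S.mulVec x) = U.mulVec x := by
    intro x
    have hSx : S.mulVec x = ∑ j, x j • Y j := by
      funext l
      rw [Finset.sum_apply]
      simp only [Pi.smul_apply, smul_eq_mul, Matrix.mulVec, dotProduct, hSdef, Matrix.of_apply]
      exact Finset.sum_congr rfl (fun j _ => mul_comm _ _)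
    have hxdec : (∑ j, x j • (Pi.single j 1 : Fin k → ℝ)) = x := by
      funext l
      rw [Finset.sum_apply]
      simp [Pi.single_apply]
    rw [hSx]
    have hlin : Uhat.mulVec (∑ j, x j • Y j) = ∑ j, x j • Uhat.mulVec (Y j) := by
      calc Uhat.mulVec (∑ j, x j • Y j) = ∑ j, Uhat.mulVec (x j • Y j) := by
            have := map_sum Uhat.mulVecLin (fun j => x j • Y j) Finset.univ
            simpa only [mulVecLin_apply] using this
      _ = ∑ j, x j • Uhat.mulVec (Y j) :=
            Finset.sum_congr rfl (fun j _ => mulVec_smul Uhat (x j) (Y j))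
    rw [hlin]
    have hstep : ∑ j, x j • Uhat.mulVec (Y j) = ∑ j, x j • U.mulVec (Pi.single j 1) := by
      exact Finset.sum_congr rfl (fun j _ => by rw [hY j])
    rw [hstep]
    have hlin2 : (∑ j, x j • U.mulVec (Pi.single j 1)) = U.mulVec x := by
      conv_rhs => rw [← hxdec]
      calc ∑ j, x j • U.mulVec (Pi.single j 1)
          = ∑ j, U.mulVec (x j • (Pi.single j 1 : Fin k → ℝ)) :=
            Finset.sum_congr rfl (fun j _ => (mulVec_smul U (x j) (Pi.single j 1)).symm)
      _ = U.mulVec (∑ j, x j • (Pi.single j 1 : Fin k → ℝ)) := by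
            have := map_sum U.mulVecLin
              (fun j => x j • (Pi.single j 1 : Fin k → ℝ)) Finset.univ
            simpa only [mulVecLin_apply] using this.symm
    rw [hlin2]
  -- spectral bound on S
  have hSspec : specNorm S ≤ Real.sqrt 5 / 2 := by
    apply specNorm_le (by positivity)
    intro x hx
    have h1 := hsig (S.mulVec x)
    rw [hUS x, hUIso x, hx] at h1
    exact aux_S (vecNorm_nonneg (S.mulVec x)) h1 hc25 ha0
  -- rows of U are short
  have hUmat : U = Uhat * S := by
    ext i j
    have h : U.mulVec (Pi.single j 1) = (Uhat * S).mulVec (Pi.single j 1) := by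
      rw [← mulVec_mulVec, hUS]
    rw [mulVec_single, mulVec_single] at h
    have := congrFun h i
    simpa using this
  have hrowUhat : ∀ i, vecNorm (Uhat i) ≤ 2 * s := by
    intro i
    rw [hUhat i, T1]
    by_cases hcs : 2 * s ≤ vecNorm (Ubar i)
    · rw [if_pos hcs, vecNorm_smul]
      have hrpos : 0 < vecNorm (Ubar i) := lt_of_lt_of_le (by linarith) hcs
      rw [abs_of_nonneg (by positivity), div_mul_cancel₀ _ (ne_of_gt hrpos)]
      linarith
    · rw [if_neg hcs]
      linarith [not_le.mp hcs]
  have hrowU : ∀ i, vecNorm (U i) ≤ Real.sqrt 5 * s := by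
    intro i
    have hUi : U i = Sᵀ.mulVec (Uhat i) := by
      conv_lhs => rw [hUmat]
      exact row_mul Uhat S i
    calc vecNorm (U i) ≤ specNorm Sᵀ * vecNorm (Uhat i) := by
          rw [hUi]; exact vecNorm_mulVec_le hk Sᵀ _
    _ ≤ (Real.sqrt 5 / 2) * (2 * s) :=
        mul_le_mul (le_trans (specNorm_transpose_le hk hk S) hSspec) (hrowUhat i)
          (vecNorm_nonneg _) (by positivity)
    _ = Real.sqrt 5 * s := by ring
  have hgoal1 : ∀ i, vecNorm (U i) ≤ Real.sqrt (5 * μ₀ * k / n) := by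
    intro i
    refine le_trans (hrowU i) (le_of_eq ?_)
    rw [hs, ← Real.sqrt_mul (by norm_num : (0:ℝ) ≤ 5)]
    congr 1
    ring
  -- now the distance bound
  obtain ⟨Q, hQ⟩ : ∃ zz, zz = Ustar * Ustarᵀ := ⟨_, rfl⟩
  obtain ⟨P, hP⟩ : ∃ zz, zz = U * Uᵀ := ⟨_, rfl⟩
  obtain ⟨τ, hτdef⟩ : ∃ zz, zz = distS Ubar Ustar + 1/φ := ⟨_, rfl⟩
  have hτ0 : 0 ≤ τ := by rw [hτdef]; linarith
  have hτ2ε : τ ≤ 2 * (1/φ) := by rw [hτdef]; linarith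
  -- claim A: the matrix (I - Q) Uhat has small norm
  obtain ⟨N, hNdef⟩ : ∃ zz, zz = Uhat - Ustar * (Ustarᵀ * Uhat) := ⟨_, rfl⟩
  have hNsplit : N = M + (D - Ustar * (Ustarᵀ * D)) := by
    rw [hNdef, hMdef, hDdef, Matrix.mul_sub, Matrix.mul_sub]
    abel
  have hN2 : specNorm (D - Ustar * (Ustarᵀ * D)) ≤ 1/φ := by
    apply specNorm_le (le_of_lt hε0)
    intro y hy
    have e : (D - Ustar * (Ustarᵀ * D)).mulVec y
        = D.mulVec y - (Ustar * Ustarᵀ).mulVec (D.mulVec y) := by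
      rw [sub_mulVec, ← Matrix.mul_assoc, ← mulVec_mulVec]
    rw [e]
    calc vecNorm (D.mulVec y - (Ustar * Ustarᵀ).mulVec (D.mulVec y))
        ≤ vecNorm (D.mulVec y) := proj_contract hUstarOrth _
    _ ≤ specNorm D * vecNorm y := vecNorm_mulVec_le hk D y
    _ ≤ 1/φ := by rw [hy, mul_one]; exact hDspec
  have hNspec : specNorm N ≤ τ := by
    rw [hNsplit, hτdef]
    exact le_trans (specNorm_add_le hk M _) (add_le_add hMspec hN2)
  have hfA : ∀ y : Fin k → ℝ,
      vecNorm (Uhat.mulVec y - Q.mulVec (Uhat.mulVec y)) ≤ τ * vecNorm y := by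
    intro y
    have e : N.mulVec y = Uhat.mulVec y - Q.mulVec (Uhat.mulVec y) := by
      rw [hNdef, sub_mulVec, ← Matrix.mul_assoc, ← mulVec_mulVec, ← hQ]
    rw [← e]
    exact le_trans (vecNorm_mulVec_le hk N y)
      (mul_le_mul_of_nonneg_right hNspec (vecNorm_nonneg y))
  -- claim B: columns of Ustar are close to range of U
  have hB : ∀ w : Fin k → ℝ,
      vecNorm (Ustar.mulVec w - P.mulVec (Ustar.mulVec w)) ≤ τ * vecNorm w := by
    intro w
    obtain ⟨v, hv⟩ : ∃ zz, zz = Ustar.mulVec w := ⟨_, rfl⟩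
    obtain ⟨w', hw'⟩ : ∃ zz, zz = Ubarᵀ.mulVec v := ⟨_, rfl⟩
    rw [← hv]
    obtain ⟨z, hz⟩ : ∃ z, U.mulVec z = Uhat.mulVec w' := by
      have hmem : Uhat.mulVec w' ∈ LinearMap.range Uhat.mulVecLin :=
        ⟨w', by simp [mulVecLin_apply]⟩
      rw [← hspan] at hmem
      obtain ⟨z, hz⟩ := hmem
      exact ⟨z, by simpa [mulVecLin_apply] using hz⟩
    have h0 := proj_min hUOrth v z
    rw [hz, ← hP] at h0
    have hsplit2 : v - Uhat.mulVec w' = (v - Ubar.mulVec w') - D.mulVec w' := by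
      rw [hDdef, sub_mulVec]; abel
    have h1 : vecNorm (v - Uhat.mulVec w')
        ≤ vecNorm (v - Ubar.mulVec w') + vecNorm (D.mulVec w') := by
      rw [hsplit2]; exact vecNorm_sub_le _ _
    have eQv : Q.mulVec v = v := by
      rw [hv, hQ, mulVec_mulVec, Matrix.mul_assoc, hUstarOrth, Matrix.mul_one]
    have h2 : vecNorm (v - Ubar.mulVec w') ≤ distS Ubar Ustar * vecNorm w := by
      have eUb : (Ubar * Ubarᵀ).mulVec v = Ubar.mulVec w' := by
        conv_rhs => rw [hw', mulVec_mulVec]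
      have e2 : v - Ubar.mulVec w' = (Q - Ubar * Ubarᵀ).mulVec v := by
        rw [sub_mulVec, eQv, eUb]
      rw [e2]
      have hneg : specNorm (Q - Ubar * Ubarᵀ) = distS Ubar Ustar := by
        have e3 : Q - Ubar * Ubarᵀ = -(Ubar * Ubarᵀ - Q) := by abel
        rw [e3, specNorm_neg, hQ]
        rfl
      calc vecNorm ((Q - Ubar * Ubarᵀ).mulVec v)
          ≤ specNorm (Q - Ubar * Ubarᵀ) * vecNorm v := vecNorm_mulVec_le hn _ v
      _ = distS Ubar Ustar * vecNorm w := by rw [hneg, hv, hUstarIso]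
    have h3 : vecNorm (D.mulVec w') ≤ (1/φ) * vecNorm w := by
      have hw'le : vecNorm w' ≤ vecNorm w := by
        rw [hw']
        calc vecNorm (Ubarᵀ.mulVec v) ≤ specNorm Ubarᵀ * vecNorm v :=
            vecNorm_mulVec_le hn Ubarᵀ v
        _ ≤ 1 * vecNorm w := by
            rw [hv, hUstarIso]
            exact mul_le_mul_of_nonneg_right hUbarT1 (vecNorm_nonneg _)
        _ = vecNorm w := one_mul _
      calc vecNorm (D.mulVec w') ≤ specNorm D * vecNorm w' := vecNorm_mulVec_le hk D w'
      _ ≤ (1/φ) * vecNorm w :=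
          mul_le_mul hDspec hw'le (vecNorm_nonneg _) (le_of_lt hε0)
    calc vecNorm (v - P.mulVec v) ≤ vecNorm (v - Uhat.mulVec w') := h0
    _ ≤ distS Ubar Ustar * vecNorm w + (1/φ) * vecNorm w := by linarith
    _ = τ * vecNorm w := by rw [hτdef]; ring
  -- assemble the distance bound
  have hgoal2 : distS U Ustar ≤ Real.sqrt 10 / φ := by
    have hshow : distS U Ustar = specNorm (P - Q) := by rw [hP, hQ]; rfl
    rw [hshow]
    apply specNorm_le (le_of_lt (div_pos hb0' hφ0))
    intro x hx
    obtain ⟨a, hadef⟩ : ∃ zz, zz = P.mulVec x - Q.mulVec (P.mulVec x) := ⟨_, rfl⟩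
    obtain ⟨b, hbdef⟩ : ∃ zz, zz = Q.mulVec (x - P.mulVec x) := ⟨_, rfl⟩
    have hab' : (P - Q).mulVec x = a - b := by
      rw [hadef, hbdef, sub_mulVec, mulVec_sub]; abel
    have horth : a ⬝ᵥ b = 0 := by
      rw [hadef, hbdef]
      have eb : Q.mulVec (x - P.mulVec x)
          = Ustar.mulVec (Ustarᵀ.mulVec (x - P.mulVec x)) := by
        rw [hQ, ← mulVec_mulVec]
      rw [eb]
      have := proj_orth hUstarOrth (P.mulVec x) (Ustarᵀ.mulVec (x - P.mulVec x))
      rw [← hQ] at this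
      exact this
    have hpyth := pythag_sub a b horth
    have hanorm : vecNorm a ≤ τ * (Real.sqrt 5 / 2) := by
      have hPx : P.mulVec x = Uhat.mulVec (S.mulVec (Uᵀ.mulVec x)) := by
        rw [hUS, hP, ← mulVec_mulVec]
      have hp1 : vecNorm (S.mulVec (Uᵀ.mulVec x)) ≤ Real.sqrt 5 / 2 := by
        have hUx1 : vecNorm (Uᵀ.mulVec x) ≤ 1 := by
          calc vecNorm (Uᵀ.mulVec x) ≤ specNorm Uᵀ * vecNorm x := vecNorm_mulVec_le hn Uᵀ x
          _ ≤ 1 := by rw [hx, mul_one]; exact hUT1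
        calc vecNorm (S.mulVec (Uᵀ.mulVec x))
            ≤ specNorm S * vecNorm (Uᵀ.mulVec x) := vecNorm_mulVec_le hk S _
        _ ≤ (Real.sqrt 5 / 2) * 1 :=
            mul_le_mul hSspec hUx1 (vecNorm_nonneg _) (by positivity)
        _ = Real.sqrt 5 / 2 := mul_one _
      have hA := hfA (S.mulVec (Uᵀ.mulVec x))
      rw [← hPx] at hA
      rw [hadef]
      exact le_trans hA (mul_le_mul_of_nonneg_left hp1 hτ0)
    have hbnorm : vecNorm b ≤ τ := by
      obtain ⟨T, hT⟩ : ∃ zz, zz = (1 - P) * Q := ⟨_, rfl⟩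
      have hQsym : Qᵀ = Q := by rw [hQ, transpose_mul, transpose_transpose]
      have hPsym : Pᵀ = P := by rw [hP, transpose_mul, transpose_transpose]
      have hTt : Tᵀ = Q * (1 - P) := by
        rw [hT, transpose_mul, hQsym, transpose_sub, transpose_one, hPsym]
      have hbT : b = Tᵀ.mulVec x := by
        rw [hTt, hbdef, ← mulVec_mulVec, sub_mulVec, one_mulVec]
      have hTspec : specNorm T ≤ τ := by
        apply specNorm_le hτ0
        intro z hz
        have e : T.mulVec z = Ustar.mulVec (Ustarᵀ.mulVec z)
            - P.mulVec (Ustar.mulVec (Ustarᵀ.mulVec z)) := by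
          rw [hT, ← mulVec_mulVec, sub_mulVec, one_mulVec, hQ, ← mulVec_mulVec]
        rw [e]
        refine le_trans (hB (Ustarᵀ.mulVec z)) ?_
        have hzz : vecNorm (Ustarᵀ.mulVec z) ≤ 1 := by
          calc vecNorm (Ustarᵀ.mulVec z) ≤ specNorm Ustarᵀ * vecNorm z :=
              vecNorm_mulVec_le hn Ustarᵀ z
          _ ≤ 1 := by rw [hz, mul_one]; exact hUstarT1
        calc τ * vecNorm (Ustarᵀ.mulVec z) ≤ τ * 1 :=
            mul_le_mul_of_nonneg_left hzz hτ0
        _ = τ := mul_one τ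
      rw [hbT]
      calc vecNorm (Tᵀ.mulVec x) ≤ specNorm Tᵀ * vecNorm x := vecNorm_mulVec_le hn Tᵀ x
      _ ≤ specNorm T := by rw [hx, mul_one]; exact specNorm_transpose_le hn hn T
      _ ≤ τ := hTspec
    rw [hab']
    have hA2 : vecNorm a ^ 2 ≤ (τ * (Real.sqrt 5 / 2)) ^ 2 :=
      pow_le_pow_left₀ (vecNorm_nonneg a) hanorm 2
    have hB2 : vecNorm b ^ 2 ≤ τ ^ 2 := pow_le_pow_left₀ (vecNorm_nonneg b) hbnorm 2
    have hX2 : vecNorm (a - b) ^ 2 ≤ 9 * (1/φ)^2 := by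
      rw [hpyth]
      exact aux_X2 hA2 hB2 ha5 hτ2ε hτ0
    have hfin : vecNorm (a - b) ≤ 3 * (1/φ) :=
      aux_fin hX2 (vecNorm_nonneg _) hε0
    have hlast : 3 * (1/φ) ≤ Real.sqrt 10 / φ := by
      rw [div_eq_mul_one_div (Real.sqrt 10) φ]
      exact mul_le_mul_of_nonneg_right (by linarith) (le_of_lt hε0)
    linarith
  exact ⟨hgoal1, hgoal2⟩
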